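/- Let w1, w2 be even integers ≥ 2. Consider the ℚ-linear map Φ : (P_H, P_D, P_V) ↦ P_H − P_D + P_V from the product (W_{w1}^ℚ⊗1) × V_{w1,w2}^ℚ[I_D] × (X1^{w1}⊗W_{w2}^ℚ) to V_{w1,w2}^ℚ. Its image is E_{w1,w2}^ℚ and its kernel is the one-dimensional ℚ-line spanned by (1 − X1^{w1}, 1 − X1^{w1}X2^{w2}, X1^{w1}(1 − X2^{w2})); in particular 1 − X1^{w1} ∈ W_{w1}^ℚ⊗1, 1 − X1^{w1}X2^{w2} ∈ V_{w1,w2}^ℚ[I_D], X1^{w1}(1 − X2^{w2}) ∈ X1^{w1}⊗W_{w2}^ℚ, and any triple (P_H,P_D,P_V) in the product with P_H − P_D + P_V = 0 is a rational multiple of this one. -/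

import Mathlib

open MvPolynomial

/-- `SL(2, ℤ)`. -/
abbrev SL2Z := Matrix.SpecialLinearGroup (Fin 2) ℤ

/-- `S = [[0,-1],[1,0]]`. -/
def matS : SL2Z := ⟨!![0, -1; 1, 0], by norm_num [Matrix.det_fin_two_of]⟩

/-- `U = [[0,1],[-1,1]]`. -/
def matU : SL2Z := ⟨!![0, 1; -1, 1], by norm_num [Matrix.det_fin_two_of]⟩

/-- `T = [[1,1],[0,1]]`. -/
def matT : SL2Z := ⟨!![1, 1; 0, 1], by norm_num [Matrix.det_fin_two_of]⟩

/-- The weight-`w` action of `γ = [[a,b],[c,d]] ∈ SL(2,ℤ)` on a one-variable polynomial of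
degree ≤ w : `(γ·Q)(X) = (-cX+a)^w Q((dX-b)/(-cX+a))`, written coefficientwise. -/
noncomputable def polyAct1 {R : Type*} [CommRing R] (w : ℕ) (γ : SL2Z) (Q : Polynomial R) :
    Polynomial R :=
  ∑ m ∈ Finset.range (w + 1),
    Polynomial.C (Q.coeff m) *
      (Polynomial.C ((γ.1 1 1 : ℤ) : R) * Polynomial.X - Polynomial.C ((γ.1 0 1 : ℤ) : R)) ^ m *
      (Polynomial.C (-((γ.1 1 0 : ℤ) : R)) * Polynomial.X + Polynomial.C ((γ.1 0 0 : ℤ) : R)) ^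
        (w - m)

/-- `((dX-b)^m) * ((-cX+a)^n)` for `γ = [[a,b],[c,d]]`, in the variable `x`. -/
noncomputable def mfrac {R : Type*} [CommRing R] (γ : SL2Z) (x : MvPolynomial (Fin 2) R)
    (m n : ℕ) : MvPolynomial (Fin 2) R :=
  (MvPolynomial.C ((γ.1 1 1 : ℤ) : R) * x - MvPolynomial.C ((γ.1 0 1 : ℤ) : R)) ^ m *
    (MvPolynomial.C (-((γ.1 1 0 : ℤ) : R)) * x + MvPolynomial.C ((γ.1 0 0 : ℤ) : R)) ^ n

/-- The action of a pair `(γ1, γ2) ∈ SL(2,ℤ)²` on polynomials in `X1 = X 0`, `X2 = X 1` of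
degree ≤ w1 in `X1` and ≤ w2 in `X2`: the weight-`w1` action on `X1` via `γ1` and the
weight-`w2` action on `X2` via `γ2`. -/
noncomputable def polyAct2 {R : Type*} [CommRing R] (w1 w2 : ℕ) (γ1 γ2 : SL2Z)
    (P : MvPolynomial (Fin 2) R) : MvPolynomial (Fin 2) R :=
  ∑ m1 ∈ Finset.range (w1 + 1), ∑ m2 ∈ Finset.range (w2 + 1),
    MvPolynomial.C (MvPolynomial.coeff (Finsupp.single 0 m1 + Finsupp.single 1 m2) P) *
      mfrac γ1 (MvPolynomial.X 0) m1 (w1 - m1) * mfrac γ2 (MvPolynomial.X 1) m2 (w2 - m2)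

/-- Membership in `V_w^ℚ` : degree at most `w`. -/
def MemV1 (w : ℕ) (P : Polynomial ℚ) : Prop := P.natDegree ≤ w

/-- Membership in `W_w^ℚ = {P ∈ V_w^ℚ : (1+S)·P = 0, (1+U+U²)·P = 0}`. -/
def MemW1 (w : ℕ) (P : Polynomial ℚ) : Prop :=
  MemV1 w P ∧ P + polyAct1 w matS P = 0 ∧
    P + polyAct1 w matU P + polyAct1 w (matU ^ 2) P = 0

/-- Membership in `V_{w1,w2}^ℚ` : degree ≤ w1 in `X1 = X 0` and ≤ w2 in `X2 = X 1`. -/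
def MemV2 (w1 w2 : ℕ) (P : MvPolynomial (Fin 2) ℚ) : Prop :=
  MvPolynomial.degreeOf 0 P ≤ w1 ∧ MvPolynomial.degreeOf 1 P ≤ w2

/-- The embedding `P1(X) ↦ P1(X1)` of one-variable polynomials in the variable `X1 = X 0`. -/
noncomputable def toX1 (P1 : Polynomial ℚ) : MvPolynomial (Fin 2) ℚ :=
  Polynomial.aeval (MvPolynomial.X 0 : MvPolynomial (Fin 2) ℚ) P1


/-- The embedding `P2(X) ↦ P2(X2)` of one-variable polynomials in the variable `X2 = X 1`. -/
noncomputable def toX2 (P2 : Polynomial ℚ) : MvPolynomial (Fin 2) ℚ :=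
  Polynomial.aeval (MvPolynomial.X 1 : MvPolynomial (Fin 2) ℚ) P2

/-- Membership in `V_{w1,w2}^ℚ[I_D]` : lies in `V_{w1,w2}^ℚ` and is killed by
`(1,1)+(S,S)` and `(1,1)+(U,U)+(U²,U²)`. -/
def MemVID (w1 w2 : ℕ) (P : MvPolynomial (Fin 2) ℚ) : Prop :=
  MemV2 w1 w2 P ∧ P + polyAct2 w1 w2 matS matS P = 0 ∧
    P + polyAct2 w1 w2 matU matU P + polyAct2 w1 w2 (matU ^ 2) (matU ^ 2) P = 0

/-- Diagonal evaluation `P(X1,X2) ↦ P(Z,Z)`. -/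
noncomputable def diagEval (P : MvPolynomial (Fin 2) ℚ) : Polynomial ℚ :=
  MvPolynomial.aeval (fun _ : Fin 2 => (Polynomial.X : Polynomial ℚ)) P

/-- Membership in `W_{w1}^ℚ ⊗ 1 = {P1(X1) : P1 ∈ W_{w1}^ℚ}`. -/
def MemH (w1 : ℕ) (P : MvPolynomial (Fin 2) ℚ) : Prop :=
  ∃ P1 : Polynomial ℚ, MemW1 w1 P1 ∧ P = toX1 P1

/-- Membership in `X1^{w1} ⊗ W_{w2}^ℚ = {X1^{w1}·P2(X2) : P2 ∈ W_{w2}^ℚ}`. -/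
def MemVert (w1 w2 : ℕ) (P : MvPolynomial (Fin 2) ℚ) : Prop :=
  ∃ P2 : Polynomial ℚ, MemW1 w2 P2 ∧ P = MvPolynomial.X 0 ^ w1 * toX2 P2

/-- Membership in `E_{w1,w2}^ℚ = (W_{w1}^ℚ⊗1) + V_{w1,w2}^ℚ[I_D] + (X1^{w1}⊗W_{w2}^ℚ)`. -/
def MemE (w1 w2 : ℕ) (P : MvPolynomial (Fin 2) ℚ) : Prop :=
  ∃ h d v : MvPolynomial (Fin 2) ℚ,
    MemH w1 h ∧ MemVID w1 w2 d ∧ MemVert w1 w2 v ∧ P = h + d + v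


section Aux

lemma matU_sq : ((matU ^ 2 : SL2Z) : Matrix (Fin 2) (Fin 2) ℤ) = !![-1, 1; -1, 0] := by
  rw [pow_two, Matrix.SpecialLinearGroup.coe_mul]
  show (!![0, 1; -1, 1] : Matrix (Fin 2) (Fin 2) ℤ) * !![0, 1; -1, 1] = _
  norm_num [Matrix.mul_fin_two]

lemma matU_sq' : ((matU : Matrix (Fin 2) (Fin 2) ℤ)) ^ 2 = !![-1, 1; -1, 0] := by
  rw [← Matrix.SpecialLinearGroup.coe_pow, matU_sq]

lemma fin2_finsupp_eq (n : Fin 2 →₀ ℕ) :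
    n = Finsupp.single 0 (n 0) + Finsupp.single 1 (n 1) := by
  ext a
  fin_cases a <;> simp [Finsupp.single_apply]

lemma coeff_toX1 (P : Polynomial ℚ) (n : Fin 2 →₀ ℕ) :
    coeff n (toX1 P) = if n 1 = 0 then P.coeff (n 0) else 0 := by
  rw [toX1, Polynomial.aeval_def, Polynomial.eval₂_eq_sum, Polynomial.sum]
  rw [coeff_sum]
  simp only [algebraMap_eq, coeff_C_mul, coeff_X_pow]
  by_cases h1 : n 1 = 0
  · have key : ∀ k : ℕ, (Finsupp.single (0 : Fin 2) k = n) ↔ (k = n 0) := by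
      intro k
      constructor
      · rintro rfl; simp
      · rintro rfl
        conv_rhs => rw [fin2_finsupp_eq n]
        rw [h1, Finsupp.single_zero, add_zero]
    simp only [key, mul_ite, mul_one, mul_zero, if_pos h1]
    rw [Finset.sum_ite_eq' P.support (n 0) P.coeff]
    split_ifs with h
    · rfl
    · exact (Polynomial.notMem_support_iff.mp h).symm
  · rw [if_neg h1]
    apply Finset.sum_eq_zero
    intro k _
    have : Finsupp.single (0 : Fin 2) k ≠ n := by rintro rfl; simp at h1
    rw [if_neg this, mul_zero]

lemma coeff_toX2 (P : Polynomial ℚ) (n : Fin 2 →₀ ℕ) :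
    coeff n (toX2 P) = if n 0 = 0 then P.coeff (n 1) else 0 := by
  rw [toX2, Polynomial.aeval_def, Polynomial.eval₂_eq_sum, Polynomial.sum]
  rw [coeff_sum]
  simp only [algebraMap_eq, coeff_C_mul, coeff_X_pow]
  by_cases h1 : n 0 = 0
  · have key : ∀ k : ℕ, (Finsupp.single (1 : Fin 2) k = n) ↔ (k = n 1) := by
      intro k
      constructor
      · rintro rfl; simp
      · rintro rfl
        conv_rhs => rw [fin2_finsupp_eq n]
        rw [h1, Finsupp.single_zero, zero_add]
    simp only [key, mul_ite, mul_one, mul_zero, if_pos h1]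
    rw [Finset.sum_ite_eq' P.support (n 1) P.coeff]
    split_ifs with h
    · rfl
    · exact (Polynomial.notMem_support_iff.mp h).symm
  · rw [if_neg h1]
    apply Finset.sum_eq_zero
    intro k _
    have : Finsupp.single (1 : Fin 2) k ≠ n := by rintro rfl; simp at h1
    rw [if_neg this, mul_zero]

lemma coeff_mul_toX (P1 P2 : Polynomial ℚ) (m1 m2 : ℕ) :
    coeff (Finsupp.single 0 m1 + Finsupp.single 1 m2) (toX1 P1 * toX2 P2)
      = P1.coeff m1 * P2.coeff m2 := by
  rw [coeff_mul]
  rw [Finset.sum_eq_single ((Finsupp.single (0:Fin 2) m1, Finsupp.single (1:Fin 2) m2) :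
      (Fin 2 →₀ ℕ) × (Fin 2 →₀ ℕ))]
  · simp [coeff_toX1, coeff_toX2, Finsupp.single_apply]
  · rintro ⟨u, v⟩ hmem hne
    rw [Finset.HasAntidiagonal.mem_antidiagonal] at hmem
    by_cases hu : u 1 = 0
    · by_cases hv : v 0 = 0
      · exfalso
        apply hne
        have h0 := DFunLike.congr_fun hmem 0
        have h1 := DFunLike.congr_fun hmem 1
        simp [Finsupp.single_apply, Finsupp.add_apply, hu, hv] at h0 h1
        have hu' : u = Finsupp.single 0 m1 := by
          ext a; fin_cases a <;> simp [Finsupp.single_apply, hu, h0]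
        have hv' : v = Finsupp.single 1 m2 := by
          ext a; fin_cases a <;> simp [Finsupp.single_apply, hv, h1]
        rw [hu', hv']
      · show coeff u (toX1 P1) * coeff v (toX2 P2) = 0
        rw [coeff_toX2, if_neg hv, mul_zero]
    · show coeff u (toX1 P1) * coeff v (toX2 P2) = 0
      rw [coeff_toX1, if_neg hu, zero_mul]
  · intro h
    exfalso
    apply h
    rw [Finset.HasAntidiagonal.mem_antidiagonal]

lemma toX1_polyAct1 (w : ℕ) (γ : SL2Z) (P : Polynomial ℚ) :
    toX1 (polyAct1 w γ P)
      = ∑ m ∈ Finset.range (w + 1), C (P.coeff m) * mfrac γ (X 0) m (w - m) := by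
  simp [toX1, polyAct1, mfrac, map_sum, mul_assoc]

lemma toX2_polyAct1 (w : ℕ) (γ : SL2Z) (P : Polynomial ℚ) :
    toX2 (polyAct1 w γ P)
      = ∑ m ∈ Finset.range (w + 1), C (P.coeff m) * mfrac γ (X 1) m (w - m) := by
  simp [toX2, polyAct1, mfrac, map_sum, mul_assoc]

lemma polyAct2_mul (w1 w2 : ℕ) (γ1 γ2 : SL2Z) (P1 P2 : Polynomial ℚ) :
    polyAct2 w1 w2 γ1 γ2 (toX1 P1 * toX2 P2)
      = toX1 (polyAct1 w1 γ1 P1) * toX2 (polyAct1 w2 γ2 P2) := by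
  rw [toX1_polyAct1, toX2_polyAct1, Finset.sum_mul_sum]
  unfold polyAct2
  refine Finset.sum_congr rfl fun m1 _ => Finset.sum_congr rfl fun m2 _ => ?_
  rw [coeff_mul_toX, map_mul]
  ring

lemma polyAct1_X_pow (w k : ℕ) (hk : k ≤ w) (γ : SL2Z) :
    polyAct1 w γ (Polynomial.X ^ k : Polynomial ℚ) =
      (Polynomial.C ((γ.1 1 1 : ℤ) : ℚ) * Polynomial.X - Polynomial.C ((γ.1 0 1 : ℤ) : ℚ)) ^ k *
      (Polynomial.C (-((γ.1 1 0 : ℤ) : ℚ)) * Polynomial.X + Polynomial.C ((γ.1 0 0 : ℤ) : ℚ)) ^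
        (w - k) := by
  unfold polyAct1
  rw [Finset.sum_eq_single k]
  · simp
  · intro m _ hm
    rw [Polynomial.coeff_X_pow, if_neg hm]
    simp
  · intro h
    exact absurd (Finset.mem_range.mpr (by omega)) h

lemma polyAct1_sub (w : ℕ) (γ : SL2Z) (P Q : Polynomial ℚ) :
    polyAct1 w γ (P - Q) = polyAct1 w γ P - polyAct1 w γ Q := by
  simp [polyAct1, sub_mul, Finset.sum_sub_distrib]

lemma polyAct2_add (w1 w2 : ℕ) (γ1 γ2 : SL2Z) (P Q : MvPolynomial (Fin 2) ℚ) :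
    polyAct2 w1 w2 γ1 γ2 (P + Q) = polyAct2 w1 w2 γ1 γ2 P + polyAct2 w1 w2 γ1 γ2 Q := by
  simp [polyAct2, add_mul, Finset.sum_add_distrib]

lemma polyAct2_sub (w1 w2 : ℕ) (γ1 γ2 : SL2Z) (P Q : MvPolynomial (Fin 2) ℚ) :
    polyAct2 w1 w2 γ1 γ2 (P - Q) = polyAct2 w1 w2 γ1 γ2 P - polyAct2 w1 w2 γ1 γ2 Q := by
  simp [polyAct2, sub_mul, Finset.sum_sub_distrib]

lemma polyAct2_neg (w1 w2 : ℕ) (γ1 γ2 : SL2Z) (P : MvPolynomial (Fin 2) ℚ) :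
    polyAct2 w1 w2 γ1 γ2 (-P) = -polyAct2 w1 w2 γ1 γ2 P := by
  have := polyAct2_sub w1 w2 γ1 γ2 0 P
  simpa [polyAct2] using this

lemma act1_S_one (w : ℕ) (hw : Even w) :
    polyAct1 w matS (1 : Polynomial ℚ) = Polynomial.X ^ w := by
  have := polyAct1_X_pow w 0 (Nat.zero_le w) matS
  simp only [pow_zero] at this
  rw [this]
  simp [matS]
  rw [show (-Polynomial.X : Polynomial ℚ) ^ w = _ from hw.neg_pow _]

lemma act1_S_Xw (w : ℕ) : polyAct1 w matS (Polynomial.X ^ w : Polynomial ℚ) = 1 := by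
  rw [polyAct1_X_pow w w le_rfl]
  simp [matS]

lemma act1_U_one (w : ℕ) :
    polyAct1 w matU (1 : Polynomial ℚ) = Polynomial.X ^ w := by
  have := polyAct1_X_pow w 0 (Nat.zero_le w) matU
  simp only [pow_zero] at this
  rw [this]
  simp [matU]

lemma act1_U_Xw (w : ℕ) :
    polyAct1 w matU (Polynomial.X ^ w : Polynomial ℚ) = (Polynomial.X - 1) ^ w := by
  rw [polyAct1_X_pow w w le_rfl]
  simp [matU]

lemma act1_U2_one (w : ℕ) :
    polyAct1 w (matU ^ 2) (1 : Polynomial ℚ) = (Polynomial.X - 1) ^ w := by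
  have := polyAct1_X_pow w 0 (Nat.zero_le w) (matU ^ 2)
  simp only [pow_zero] at this
  rw [this]
  simp only [matU_sq, matU_sq', one_mul]
  norm_num
  rw [← sub_eq_add_neg]

lemma act1_U2_Xw (w : ℕ) (hw : Even w) :
    polyAct1 w (matU ^ 2) (Polynomial.X ^ w : Polynomial ℚ) = 1 := by
  rw [polyAct1_X_pow w w le_rfl]
  simp only [matU_sq, matU_sq']
  norm_num [hw.neg_one_pow]

lemma memW1_one_sub_X_pow (w : ℕ) (hw : Even w) (hw' : 2 ≤ w) :
    MemW1 w (1 - Polynomial.X ^ w) := by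
  refine ⟨?_, ?_, ?_⟩
  · unfold MemV1
    refine le_trans (Polynomial.natDegree_sub_le _ _) ?_
    simp
  · rw [polyAct1_sub, act1_S_one w hw, act1_S_Xw]
    ring
  · rw [polyAct1_sub, polyAct1_sub, act1_U_one, act1_U_Xw, act1_U2_one, act1_U2_Xw w hw]
    ring

lemma memVID_neg (w1 w2 : ℕ) (d : MvPolynomial (Fin 2) ℚ) (hd : MemVID w1 w2 d) :
    MemVID w1 w2 (-d) := by
  obtain ⟨⟨h1, h2⟩, h3, h4⟩ := hd
  refine ⟨⟨?_, ?_⟩, ?_, ?_⟩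
  · rwa [degreeOf_neg]
  · rwa [degreeOf_neg]
  · rw [polyAct2_neg]
    linear_combination -h3
  · rw [polyAct2_neg, polyAct2_neg]
    linear_combination -h4

end Aux

/-- The map `Φ : (P_H, P_D, P_V) ↦ P_H - P_D + P_V` on
`(W_{w1}^ℚ⊗1) × V_{w1,w2}^ℚ[I_D] × (X1^{w1}⊗W_{w2}^ℚ)` has image `E_{w1,w2}^ℚ` and kernel the
line spanned by `(1 - X1^{w1}, 1 - X1^{w1}X2^{w2}, X1^{w1}(1 - X2^{w2}))`. -/
theorem image_and_kernel_of_E_sum_map (w1 w2 : ℕ) (hw1 : Even w1) (hw2 : Even w2)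
    (hw1' : 2 ≤ w1) (hw2' : 2 ≤ w2) :
    -- the distinguished triple lies in the product space
    MemH w1 (1 - MvPolynomial.X 0 ^ w1) ∧
    MemVID w1 w2 (1 - MvPolynomial.X 0 ^ w1 * MvPolynomial.X 1 ^ w2) ∧
    MemVert w1 w2 (MvPolynomial.X 0 ^ w1 * (1 - MvPolynomial.X 1 ^ w2)) ∧
    -- the image of Φ is E_{w1,w2}^ℚ
    (∀ P : MvPolynomial (Fin 2) ℚ,
      (∃ h d v : MvPolynomial (Fin 2) ℚ,
        MemH w1 h ∧ MemVID w1 w2 d ∧ MemVert w1 w2 v ∧ P = h - d + v) ↔ MemE w1 w2 P) ∧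
    -- the kernel of Φ is the line spanned by the distinguished triple
    (∀ h d v : MvPolynomial (Fin 2) ℚ, MemH w1 h → MemVID w1 w2 d → MemVert w1 w2 v →
      h - d + v = 0 →
      ∃ q : ℚ, h = q • (1 - MvPolynomial.X 0 ^ w1) ∧
        d = q • (1 - MvPolynomial.X 0 ^ w1 * MvPolynomial.X 1 ^ w2) ∧
        v = q • (MvPolynomial.X 0 ^ w1 * (1 - MvPolynomial.X 1 ^ w2))) := by
  have tX11 : toX1 (1 : Polynomial ℚ) = 1 := by simp [toX1]
  have tX21 : toX2 (1 : Polynomial ℚ) = 1 := by simp [toX2]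
  have tX1w : toX1 (Polynomial.X ^ w1) = X 0 ^ w1 := by simp [toX1]
  have tX2w : toX2 (Polynomial.X ^ w2) = X 1 ^ w2 := by simp [toX2]
  have tU1 : toX1 ((Polynomial.X - 1) ^ w1) = (X 0 - 1) ^ w1 := by simp [toX1]
  have tU2 : toX2 ((Polynomial.X - 1) ^ w2) = (X 1 - 1) ^ w2 := by simp [toX2]
  have hH0 : MemH w1 (1 - MvPolynomial.X 0 ^ w1) :=
    ⟨1 - Polynomial.X ^ w1, memW1_one_sub_X_pow w1 hw1 hw1', by simp [toX1]⟩
  have hV0 : MemVert w1 w2 (MvPolynomial.X 0 ^ w1 * (1 - MvPolynomial.X 1 ^ w2)) :=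
    ⟨1 - Polynomial.X ^ w2, memW1_one_sub_X_pow w2 hw2 hw2', by simp [toX2]⟩
  have hrepr : (1 : MvPolynomial (Fin 2) ℚ) - X 0 ^ w1 * X 1 ^ w2
      = toX1 1 * toX2 1 - toX1 (Polynomial.X ^ w1) * toX2 (Polynomial.X ^ w2) := by
    rw [tX11, tX21, tX1w, tX2w, one_mul]
  have hD0 : MemVID w1 w2 (1 - MvPolynomial.X 0 ^ w1 * MvPolynomial.X 1 ^ w2) := by
    refine ⟨⟨?_, ?_⟩, ?_, ?_⟩
    · refine le_trans (degreeOf_sub_le _ _ _) ?_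
      simp only [max_le_iff]
      refine ⟨by have hx := degreeOf_C (1 : ℚ) (0 : Fin 2); simp only [map_one] at hx; omega, ?_⟩
      refine le_trans (degreeOf_mul_le _ _ _) ?_
      have h1 : degreeOf 0 ((X 0 : MvPolynomial (Fin 2) ℚ) ^ w1) ≤ w1 * 1 := by
        refine le_trans (degreeOf_pow_le _ _ _) ?_
        simp [degreeOf_X]
      have h2 : degreeOf 0 ((X 1 : MvPolynomial (Fin 2) ℚ) ^ w2) ≤ w2 * 0 := by
        refine le_trans (degreeOf_pow_le _ _ _) ?_
        simp [degreeOf_X]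
      omega
    · refine le_trans (degreeOf_sub_le _ _ _) ?_
      simp only [max_le_iff]
      refine ⟨by have hx := degreeOf_C (1 : ℚ) (1 : Fin 2); simp only [map_one] at hx; omega, ?_⟩
      refine le_trans (degreeOf_mul_le _ _ _) ?_
      have h1 : degreeOf 1 ((X 0 : MvPolynomial (Fin 2) ℚ) ^ w1) ≤ w1 * 0 := by
        refine le_trans (degreeOf_pow_le _ _ _) ?_
        simp [degreeOf_X]
      have h2 : degreeOf 1 ((X 1 : MvPolynomial (Fin 2) ℚ) ^ w2) ≤ w2 * 1 := by
        refine le_trans (degreeOf_pow_le _ _ _) ?_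
        simp [degreeOf_X]
      omega
    · rw [hrepr, polyAct2_sub, polyAct2_mul, polyAct2_mul, act1_S_one w1 hw1,
        act1_S_one w2 hw2, act1_S_Xw w1, act1_S_Xw w2, tX11, tX21, tX1w, tX2w]
      ring
    · rw [hrepr, polyAct2_sub, polyAct2_sub, polyAct2_mul, polyAct2_mul, polyAct2_mul,
        polyAct2_mul, act1_U_one w1, act1_U_one w2, act1_U_Xw w1, act1_U_Xw w2,
        act1_U2_one w1, act1_U2_one w2, act1_U2_Xw w1 hw1, act1_U2_Xw w2 hw2,
        tX11, tX21, tX1w, tX2w, tU1, tU2]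
      ring
  refine ⟨hH0, hD0, hV0, ?_, ?_⟩
  · intro P
    constructor
    · rintro ⟨h, d, v, hh, hd, hv, rfl⟩
      exact ⟨h, -d, v, hh, memVID_neg _ _ _ hd, hv, by ring⟩
    · rintro ⟨h, d, v, hh, hd, hv, rfl⟩
      exact ⟨h, -d, v, hh, memVID_neg _ _ _ hd, hv, by ring⟩
  · intro h d v hh hd hv heq
    obtain ⟨P1, hP1, rfl⟩ := hh
    obtain ⟨P2, hP2, rfl⟩ := hv
    have hd_eq : d = toX1 P1 * toX2 1 + toX1 (Polynomial.X ^ w1) * toX2 P2 := by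
      rw [tX21, tX1w, mul_one]
      linear_combination -heq
    have hrel := hd.2.1
    rw [hd_eq, polyAct2_add, polyAct2_mul, polyAct2_mul] at hrel
    have hS1 : polyAct1 w1 matS P1 = -P1 := by linear_combination hP1.2.1
    have hS2 : polyAct1 w2 matS P2 = -P2 := by linear_combination hP2.2.1
    rw [hS1, hS2, act1_S_one w2 hw2, act1_S_Xw w1] at hrel
    have hco : ∀ m1 m2 : ℕ,
        P1.coeff m1 * (1 : Polynomial ℚ).coeff m2
          + (Polynomial.X ^ w1 : Polynomial ℚ).coeff m1 * P2.coeff m2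
          + ((-P1).coeff m1 * (Polynomial.X ^ w2 : Polynomial ℚ).coeff m2
              + (1 : Polynomial ℚ).coeff m1 * (-P2).coeff m2) = 0 := by
      intro m1 m2
      have hc := congrArg (coeff (Finsupp.single 0 m1 + Finsupp.single 1 m2)) hrel
      simpa only [coeff_add, coeff_mul_toX, coeff_zero] using hc
    set q := P2.coeff 0 with hq_def
    have hP1eq : P1 = Polynomial.C q * (1 - Polynomial.X ^ w1) := by
      ext m1
      have hc := hco m1 0
      simp only [Polynomial.coeff_one, Polynomial.coeff_X_pow, Polynomial.coeff_neg,
        if_pos rfl, mul_one] at hc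
      rw [if_neg (by omega : ¬ (0 = w2))] at hc
      rw [Polynomial.coeff_C_mul, Polynomial.coeff_sub, Polynomial.coeff_one,
        Polynomial.coeff_X_pow]
      split_ifs at hc ⊢ <;> first | omega | (push_neg at *; linarith)
    have hq1 : P1.coeff 0 = q := by
      rw [hP1eq, Polynomial.coeff_C_mul, Polynomial.coeff_sub, Polynomial.coeff_one,
        Polynomial.coeff_X_pow, if_pos rfl, if_neg (by omega : ¬ (0 = w1))]
      ring
    have hP2eq : P2 = Polynomial.C q * (1 - Polynomial.X ^ w2) := by
      ext m2
      have hc := hco 0 m2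
      simp only [Polynomial.coeff_one, Polynomial.coeff_X_pow, Polynomial.coeff_neg,
        if_pos rfl, one_mul] at hc
      rw [if_neg (by omega : ¬ (0 = w1)), hq1] at hc
      rw [Polynomial.coeff_C_mul, Polynomial.coeff_sub, Polynomial.coeff_one,
        Polynomial.coeff_X_pow]
      split_ifs at hc ⊢ <;> first | omega | (push_neg at *; linarith)
    refine ⟨q, ?_, ?_, ?_⟩
    · rw [hP1eq, smul_eq_C_mul]
      simp [toX1, algebraMap_eq]
    · rw [hd_eq, tX21, tX1w, mul_one, hP1eq, hP2eq, smul_eq_C_mul]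
      simp only [toX1, toX2, map_mul, map_sub, map_one, map_pow, Polynomial.aeval_X,
        Polynomial.aeval_C, algebraMap_eq]
      ring
    · rw [hP2eq, smul_eq_C_mul]
      simp only [toX2, map_mul, map_sub, map_one, map_pow, Polynomial.aeval_X,
        Polynomial.aeval_C, algebraMap_eq]
      ring
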